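/- Let k ≥ 3 and ℓ ≥ k + 2 with gcd(k, ℓ) > 1 and k not dividing ℓ. Set d = gcd(k, ℓ) and m = k/d (so m > 1). Then there is no copy of C_ℓ^(k)- in the k-graph G_{m,N} for any N, where G_{m,N} has vertex set partitioned into m classes each of size N with class-function f, and edges exactly the k-sets whose f-values sum to 1 in Z/mZ. -/

import Mathlib

/-- The edge of the `k`-uniform tight cycle on `ZMod m` starting at vertex `i`. -/
def tightWindow (m k : ℕ) (i : ZMod m) : Finset (ZMod m) :=
  (Finset.range k).image fun j : ℕ => i + (j : ZMod m)

/-- Let `k ≥ 3`, `ℓ ≥ k + 2` with `gcd(k, ℓ) > 1` and `k ∤ ℓ`; set `d = gcd(k, ℓ)` and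
`m = k / d` (so `m > 1`). Then for every `N`, the `k`-graph `G_{m,N}` on vertex set
`ZMod m × Fin N` (class function `Prod.fst`, edges = `k`-sets whose first coordinates
sum to `1` in `ZMod m`) contains no copy of `C_ℓ^(k)-`: there is no injective map from
the vertices of the tight cycle such that every window except the one starting at
`ℓ - 1` (the removed edge) is sent to an edge of `G_{m,N}`. -/
theorem no_tight_cycle_minus_in_G (k ℓ : ℕ) (hk : 3 ≤ k) (hℓ : k + 2 ≤ ℓ)
    (hgcd : 1 < Nat.gcd k ℓ) (hndvd : ¬ k ∣ ℓ) (m : ℕ) (hm : m = k / Nat.gcd k ℓ)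
    (N : ℕ) :
    ¬ ∃ g : ZMod ℓ → ZMod m × Fin N, Function.Injective g ∧
        ∀ i ∈ Finset.range (ℓ - 1),
          (∑ v ∈ (tightWindow ℓ k (i : ZMod ℓ)).image g, v.1) = 1 := by
  rintro ⟨g, hginj, hedge⟩
  set d := Nat.gcd k ℓ with hd
  have hd2 : 2 ≤ d := hgcd
  have hdk : d ∣ k := Nat.gcd_dvd_left k ℓ
  have hdl : d ∣ ℓ := Nat.gcd_dvd_right k ℓ
  have hkl : k < ℓ := by omega
  have hl5 : 5 ≤ ℓ := by omega
  haveI : NeZero ℓ := ⟨by omega⟩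
  have hdlek : d ≤ k := Nat.le_of_dvd (by omega) hdk
  set t := ℓ / d with ht
  have hlt : ℓ = d * t := (Nat.mul_div_cancel' hdl).symm
  have hkm : k = d * m := by rw [hm]; exact (Nat.mul_div_cancel' hdk).symm
  have hm2 : 2 ≤ m := by
    by_contra h
    have hm1 : m = 1 := by
      rcases Nat.eq_zero_or_pos m with h0 | h0
      · rw [h0, Nat.mul_zero] at hkm; omega
      · omega
    rw [hm1, Nat.mul_one] at hkm
    exact hndvd (hkm ▸ hdl)
  have ht2 : 2 ≤ t := by
    by_contra h
    rcases Nat.eq_zero_or_pos t with h0 | h0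
    · rw [h0, Nat.mul_zero] at hlt; omega
    · have h1 : t = 1 := by omega
      rw [h1, Nat.mul_one] at hlt; omega
  have hcop : Nat.Coprime m t := by
    rw [hm, ht]
    exact Nat.coprime_div_gcd_div_gcd (by omega)
  -- the class function on ℕ
  set F : ℕ → ZMod m := fun n => (g ((n : ℕ) : ZMod ℓ)).1 with hF
  have Fcong : ∀ {a b : ℕ}, a ≡ b [MOD ℓ] → F a = F b := by
    intro a b h
    simp only [hF]
    rw [(ZMod.natCast_eq_natCast_iff a b ℓ).mpr h]
  -- window sums
  have Hsum : ∀ i : ℕ, i < ℓ - 1 → ∑ j ∈ Finset.range k, F (i + j) = 1 := by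
    intro i hi
    have h := hedge i (Finset.mem_range.mpr hi)
    rw [tightWindow, Finset.image_image, Finset.sum_image ?_] at h
    · rw [← h]
      refine Finset.sum_congr rfl fun j _ => ?_
      simp only [hF, Function.comp_apply, Nat.cast_add]
    · intro x hx y hy hxy
      have hx' : x < ℓ := lt_trans (Finset.mem_range.mp hx) hkl
      have hy' : y < ℓ := lt_trans (Finset.mem_range.mp hy) hkl
      have h1 : (x : ZMod ℓ) = y := add_left_cancel (hginj hxy)
      have h2 := congrArg ZMod.val h1
      rwa [ZMod.val_cast_of_lt hx', ZMod.val_cast_of_lt hy'] at h2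
  -- the key step rule
  have step : ∀ i : ℕ, i % ℓ ≤ ℓ - 3 → F (i + k) = F i := by
    intro i hi
    set a := i % ℓ with ha
    have key : F (a + k) = F a := by
      have hA := Hsum a (by omega)
      have hB := Hsum (a + 1) (by omega)
      have e1 : ∑ j ∈ Finset.range (k+1), F (a + j)
          = (∑ j ∈ Finset.range k, F (a + j)) + F (a + k) :=
        Finset.sum_range_succ _ k
      have e2 : ∑ j ∈ Finset.range (k+1), F (a + j)
          = (∑ j ∈ Finset.range k, F (a + (j + 1))) + F (a + 0) :=
        Finset.sum_range_succ' _ k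
      have e3 : ∑ j ∈ Finset.range k, F (a + (j + 1))
          = ∑ j ∈ Finset.range k, F (a + 1 + j) :=
        Finset.sum_congr rfl fun j _ => by rw [show a + (j + 1) = a + 1 + j by omega]
      rw [hA] at e1
      rw [e3, hB] at e2
      have := e1.symm.trans e2
      have h4 : F (a + k) = F (a + 0) := by exact add_left_cancel this
      rwa [Nat.add_zero] at h4
    have h1 : F i = F a := Fcong (Nat.mod_modEq i ℓ).symm
    have h2 : F (i + k) = F (a + k) := Fcong ((Nat.mod_modEq i ℓ).add_right k).symm
    rw [h1, h2, key]
  -- chains of steps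
  have chain : ∀ a s : ℕ, (∀ j, j < s → (a + j * k) % ℓ ≤ ℓ - 3) → F (a + s * k) = F a := by
    intro a s
    induction s with
    | zero => intro _; simp
    | succ n ih =>
      intro h
      have h1 : F (a + n * k + k) = F (a + n * k) := step _ (h n (by omega))
      have h2 := ih fun j hj => h j (by omega)
      calc F (a + (n + 1) * k) = F (a + n * k + k) := by rw [show a + (n+1)*k = a + n*k + k by ring]
        _ = F (a + n * k) := h1
        _ = F a := h2
  -- residue facts
  have hmodd : ∀ a j : ℕ, (a + j * k) % ℓ % d = a % d := by
    intro a j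
    rw [Nat.mod_mod_of_dvd _ hdl, hkm, show a + j * (d * m) = a + (j * m) * d by ring,
      Nat.add_mul_mod_self_right]
  have hne : (ℓ - 2) % d ≠ (ℓ - 1) % d := by
    intro h
    have : d ∣ (ℓ - 1) - (ℓ - 2) := (Nat.modEq_iff_dvd' (by omega)).mp h
    rw [show (ℓ - 1) - (ℓ - 2) = 1 by omega] at this
    exact absurd (Nat.le_of_dvd one_pos this) (by omega)
  -- at most one bad index per orbit
  have uniq : ∀ a j1 j2 : ℕ, j1 < t → j2 < t → ℓ - 2 ≤ (a + j1 * k) % ℓ →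
      ℓ - 2 ≤ (a + j2 * k) % ℓ → j1 = j2 := by
    have key : ∀ a j1 j2 : ℕ, j1 ≤ j2 → j2 < t → ℓ - 2 ≤ (a + j1 * k) % ℓ →
        ℓ - 2 ≤ (a + j2 * k) % ℓ → j1 = j2 := by
      intro a j1 j2 hle hj2 hb1 hb2
      have hv1 : (a + j1 * k) % ℓ < ℓ := Nat.mod_lt _ (by omega)
      have hv2 : (a + j2 * k) % ℓ < ℓ := Nat.mod_lt _ (by omega)
      have hveq : (a + j1 * k) % ℓ = (a + j2 * k) % ℓ := by
        have m1 := hmodd a j1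
        have m2 := hmodd a j2
        rcases (by omega : (a + j1 * k) % ℓ = ℓ - 2 ∨ (a + j1 * k) % ℓ = ℓ - 1) with h1 | h1 <;>
        rcases (by omega : (a + j2 * k) % ℓ = ℓ - 2 ∨ (a + j2 * k) % ℓ = ℓ - 1) with h2 | h2 <;>
          rw [h1] at m1 <;> rw [h2] at m2 <;> omega
      have hmeq : a + j1 * k ≡ a + j2 * k [MOD ℓ] := hveq
      have hmk : j1 * k ≡ j2 * k [MOD ℓ] := (Nat.ModEq.add_left_cancel' a) hmeq
      have hdvd : ℓ ∣ j2 * k - j1 * k :=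
        (Nat.modEq_iff_dvd' (Nat.mul_le_mul_right k hle)).mp hmk
      rw [show j2 * k - j1 * k = (j2 - j1) * k from (Nat.sub_mul j2 j1 k).symm] at hdvd
      rw [hkm, hlt, show (j2 - j1) * (d * m) = d * ((j2 - j1) * m) by ring] at hdvd
      have htm : t ∣ (j2 - j1) * m := (Nat.mul_dvd_mul_iff_left (by omega : 0 < d)).mp hdvd
      have htj : t ∣ j2 - j1 := (Nat.Coprime.dvd_of_dvd_mul_right hcop.symm) htm
      rcases Nat.eq_zero_or_pos (j2 - j1) with h | h
      · omega
      · exact absurd (Nat.le_of_dvd h htj) (by omega)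
    intro a j1 j2 h1 h2 hb1 hb2
    rcases le_total j1 j2 with h | h
    · exact key a j1 j2 h h2 hb1 hb2
    · exact (key a j2 j1 h h1 hb2 hb1).symm
  -- find s0 with s0 * k ≡ d and 1 ≤ s0 < t
  obtain ⟨u, -, hu⟩ := Nat.exists_mul_mod_eq_one_of_coprime hcop (by omega)
  set s0 := u % t with hs0def
  have hs0t : s0 < t := Nat.mod_lt _ (by omega)
  have hs0m : s0 * m % t = 1 := by
    rw [show s0 * m = m * (u % t) by ring]
    rw [Nat.mul_mod, Nat.mod_mod_of_dvd _ (dvd_refl t)]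
    rw [← Nat.mul_mod]
    exact hu
  have hs01 : 1 ≤ s0 := by
    rcases Nat.eq_zero_or_pos s0 with h | h
    · rw [h, Nat.zero_mul, Nat.zero_mod] at hs0m; omega
    · exact h
  obtain ⟨c, hc⟩ : ∃ c, s0 * m = 1 + t * c := by
    have h1 : 1 ≤ s0 * m := by nlinarith
    have := (Nat.modEq_iff_dvd' h1).mp (by
      show 1 % t = s0 * m % t
      rw [hs0m, Nat.mod_eq_of_lt (by omega)])
    obtain ⟨c, hc⟩ := this
    exact ⟨c, by omega⟩
  have hs0k : s0 * k = d + ℓ * c := by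
    rw [hkm, hlt, show s0 * (d * m) = d * (s0 * m) by ring, hc]; ring
  have hs0mod : s0 * k ≡ d [MOD ℓ] := by
    show s0 * k % ℓ = d % ℓ
    rw [hs0k, show d + ℓ * c = d + c * ℓ by ring, Nat.add_mul_mod_self_right]
  -- the coset step
  have cosetStep : ∀ a : ℕ, F (a + d) = F a := by
    intro a
    by_cases hbad : ∃ j, j < s0 ∧ ℓ - 2 ≤ (a + j * k) % ℓ
    · obtain ⟨jb, hjb, hbadj⟩ := hbad
      have good : ∀ j, j < t - s0 → (a + d + j * k) % ℓ ≤ ℓ - 3 := by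
        intro j hj
        have hcong : a + d + j * k ≡ a + (s0 + j) * k [MOD ℓ] := by
          have h1 : a + d + j * k ≡ a + s0 * k + j * k [MOD ℓ] :=
            ((hs0mod.symm.add_left a).add_right (j * k))
          rwa [show a + s0 * k + j * k = a + (s0 + j) * k by ring] at h1
        rw [show (a + d + j * k) % ℓ = (a + (s0 + j) * k) % ℓ from hcong]
        have hlt' : (a + (s0 + j) * k) % ℓ < ℓ := Nat.mod_lt _ (by omega)
        by_contra h
        have hb : ℓ - 2 ≤ (a + (s0 + j) * k) % ℓ := by omega
        have := uniq a jb (s0 + j) (by omega) (by omega) hbadj hb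
        omega
      have hFb : F (a + d + (t - s0) * k) = F (a + d) := chain _ _ good
      have hcong2 : a + d + (t - s0) * k ≡ a [MOD ℓ] := by
        have h1 : a + d + (t - s0) * k ≡ a + s0 * k + (t - s0) * k [MOD ℓ] :=
          (hs0mod.symm.add_left a).add_right _
        have h2 : a + s0 * k + (t - s0) * k = a + ℓ * m := by
          rw [show a + s0 * k + (t - s0) * k = a + (s0 + (t - s0)) * k by ring,
            Nat.add_sub_cancel' (by omega : s0 ≤ t), hkm, hlt]; ring
        rw [h2] at h1
        have h3 : a + ℓ * m ≡ a [MOD ℓ] := by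
          show (a + ℓ * m) % ℓ = a % ℓ
          rw [show a + ℓ * m = a + m * ℓ by ring, Nat.add_mul_mod_self_right]
        exact h1.trans h3
      rw [← hFb, Fcong hcong2]
    · push_neg at hbad
      have good : ∀ j, j < s0 → (a + j * k) % ℓ ≤ ℓ - 3 := by
        intro j hj
        have hlt' : (a + j * k) % ℓ < ℓ := Nat.mod_lt _ (by omega)
        have := hbad j hj
        omega
      have hFa : F (a + s0 * k) = F a := chain a s0 good
      have hcong : a + s0 * k ≡ a + d [MOD ℓ] := hs0mod.add_left a
      rw [← Fcong hcong, hFa]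
  -- F depends only on residue mod d
  have constMod : ∀ a r : ℕ, F (a + r * d) = F a := by
    intro a r
    induction r with
    | zero => simp
    | succ n ih =>
      rw [show a + (n + 1) * d = a + n * d + d by ring, cosetStep, ih]
  -- block sums
  have sumBlock : ∀ q : ℕ, ∑ j ∈ Finset.range (q * d), F j
      = (q : ZMod m) * ∑ r ∈ Finset.range d, F r := by
    intro q
    induction q with
    | zero => simp
    | succ n ih =>
      rw [show (n + 1) * d = n * d + d by ring, Finset.sum_range_add, ih]
      have : ∀ r ∈ Finset.range d, F (n * d + r) = F r := by
        intro r _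
        rw [show n * d + r = r + n * d by ring, constMod]
      rw [Finset.sum_congr rfl this]
      push_cast
      ring
  -- the contradiction
  have h0 := Hsum 0 (by omega)
  simp only [Nat.zero_add] at h0
  rw [show k = m * d by rw [hkm, Nat.mul_comm], sumBlock m, ZMod.natCast_self, zero_mul] at h0
  haveI : Fact (1 < m) := ⟨hm2⟩
  exact zero_ne_one h0
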